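/- Let (Ω, F, P) be a probability space, p ∈ (0,1), and let (X_i)_{i∈ℕ} be independent real random variables on Ω each distributed according to the Bernoulli measure (1−p)·δ₀ + p·δ₁ on ℝ. Then for every x with 0 < x < p and every natural number n ≥ 1, P({ω : ∑_{i=0}^{n−1} X_i(ω) ≤ n·x}) ≤ exp(−n·kl(x,p)). -/

import Mathlib

open MeasureTheory ProbabilityTheory Real

/-- The Bernoulli measure `(1−p)·δ₀ + p·δ₁` on `ℝ`. -/
noncomputable def bernoulliMeasure (p : ℝ) : Measure ℝ :=
  ENNReal.ofReal (1 - p) • Measure.dirac 0 + ENNReal.ofReal p • Measure.dirac 1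

/-- The Bernoulli Kullback–Leibler divergence. -/
noncomputable def klBer (p q : ℝ) : ℝ :=
  p * Real.log (p / q) + (1 - p) * Real.log ((1 - p) / (1 - q))

lemma integrable_bernoulli (p : ℝ) (f : ℝ → ℝ) :
    Integrable f (bernoulliMeasure p) := by
  have h0 : Integrable f (Measure.dirac (0 : ℝ)) :=
    (integrable_const (f 0)).congr (ae_eq_dirac f).symm
  have h1 : Integrable f (Measure.dirac (1 : ℝ)) :=
    (integrable_const (f 1)).congr (ae_eq_dirac f).symm
  exact (h0.smul_measure ENNReal.ofReal_ne_top).add_measure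
    (h1.smul_measure ENNReal.ofReal_ne_top)

lemma integral_bernoulli (p : ℝ) (hp0 : 0 ≤ p) (hp1 : p ≤ 1) (f : ℝ → ℝ) :
    ∫ y, f y ∂(bernoulliMeasure p) = (1 - p) * f 0 + p * f 1 := by
  have h0 : Integrable f ((ENNReal.ofReal (1 - p)) • Measure.dirac (0 : ℝ)) :=
    (((integrable_const (f 0)).congr (ae_eq_dirac f).symm).smul_measure
      ENNReal.ofReal_ne_top)
  have h1 : Integrable f ((ENNReal.ofReal p) • Measure.dirac (1 : ℝ)) :=
    (((integrable_const (f 1)).congr (ae_eq_dirac f).symm).smul_measure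
      ENNReal.ofReal_ne_top)
  rw [_root_.bernoulliMeasure, integral_add_measure h0 h1, integral_smul_measure,
    integral_smul_measure, integral_dirac, integral_dirac,
    ENNReal.toReal_ofReal (by linarith), ENNReal.toReal_ofReal hp0]
  simp [smul_eq_mul]

theorem bernoulli_chernoff_lower
    {Ω : Type*} [MeasurableSpace Ω] (P : Measure Ω) [IsProbabilityMeasure P]
    (p : ℝ) (hp : p ∈ Set.Ioo (0 : ℝ) 1) (X : ℕ → Ω → ℝ)
    (hindep : iIndepFun X P)
    (hmeas : ∀ i, Measurable (X i))
    (hdist : ∀ i, P.map (X i) = _root_.bernoulliMeasure p)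
    (x : ℝ) (hx : 0 < x) (hxp : x < p) (n : ℕ) (hn : 1 ≤ n) :
    P {ω | ∑ i ∈ Finset.range n, X i ω ≤ (n : ℝ) * x}
      ≤ ENNReal.ofReal (Real.exp (-(n : ℝ) * klBer x p)) := by
  obtain ⟨hp0, hp1⟩ := hp
  have hx1 : x < 1 := hxp.trans hp1
  have h1x : 0 < 1 - x := by linarith
  have h1p : 0 < 1 - p := by linarith
  set t : ℝ := Real.log (x * (1 - p) / (p * (1 - x))) with ht_def
  have hratio_pos : 0 < x * (1 - p) / (p * (1 - x)) := by positivity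
  have hratio_le : x * (1 - p) / (p * (1 - x)) ≤ 1 := by
    rw [div_le_one (by positivity)]; nlinarith
  have ht : t ≤ 0 := Real.log_nonpos hratio_pos.le hratio_le
  have hexp_t : Real.exp t = x * (1 - p) / (p * (1 - x)) :=
    Real.exp_log hratio_pos
  -- integrability of exp (t * X i)
  have hint : ∀ i, Integrable (fun ω => Real.exp (t * X i ω)) P := by
    intro i
    have := (integrable_bernoulli p (fun y => Real.exp (t * y)))
    rw [← hdist i] at this
    exact (integrable_map_measure
      (Continuous.aestronglyMeasurable (by continuity)) (hmeas i).aemeasurable).mp this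
  -- mgf of one variable
  have hmgf1 : ∀ i, mgf (X i) P t = (1 - p) + p * Real.exp t := by
    intro i
    have hmap := integral_map (μ := P) (hmeas i).aemeasurable
      (f := fun y => Real.exp (t * y)) (Continuous.aestronglyMeasurable (by continuity))
    rw [mgf, ← hmap, hdist i, integral_bernoulli p hp0.le hp1.le]
    simp
  have hintS : Integrable (fun ω => Real.exp (t * (∑ i ∈ Finset.range n, X i) ω)) P :=
    hindep.integrable_exp_mul_sum hmeas (fun i _ => hint i)
  have hcher := measure_le_le_exp_mul_mgf (μ := P)
    (X := ∑ i ∈ Finset.range n, X i) ((n : ℝ) * x) ht hintS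
  have hmgfS : mgf (∑ i ∈ Finset.range n, X i) P t = ((1 - p) + p * Real.exp t) ^ n := by
    rw [hindep.mgf_sum hmeas]
    simp [hmgf1]
  -- the key algebraic identity
  have hbase : (1 - p) + p * Real.exp t = (1 - p) / (1 - x) := by
    rw [hexp_t]; field_simp; ring
  have hkey : Real.exp (-t * ((n : ℝ) * x)) * ((1 - p) + p * Real.exp t) ^ n
      = Real.exp (-(n : ℝ) * klBer x p) := by
    rw [hbase]
    have hL : (1 - p) / (1 - x) = Real.exp (Real.log ((1 - p) / (1 - x))) :=
      (Real.exp_log (by positivity)).symm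
    rw [hL, ← Real.exp_nat_mul, ← Real.exp_add]
    congr 1
    have e1 : Real.log (x * (1 - p) / (p * (1 - x)))
        = Real.log x + Real.log (1 - p) - Real.log p - Real.log (1 - x) := by
      rw [Real.log_div (by positivity) (by positivity),
        Real.log_mul hx.ne' h1p.ne', Real.log_mul hp0.ne' h1x.ne']
      ring
    have e2 : Real.log ((1 - p) / (1 - x)) = Real.log (1 - p) - Real.log (1 - x) :=
      Real.log_div h1p.ne' h1x.ne'
    have e3 : Real.log (x / p) = Real.log x - Real.log p :=
      Real.log_div hx.ne' hp0.ne'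
    have e4 : Real.log ((1 - x) / (1 - p)) = Real.log (1 - x) - Real.log (1 - p) :=
      Real.log_div h1x.ne' h1p.ne'
    rw [klBer, ht_def, e1, e2, e3, e4]
    ring
  rw [hmgfS] at hcher
  have hset : {ω | ∑ i ∈ Finset.range n, X i ω ≤ (n : ℝ) * x}
      = {ω | (∑ i ∈ Finset.range n, X i) ω ≤ (n : ℝ) * x} := by
    simp [Finset.sum_apply]
  rw [hset, ← ENNReal.ofReal_toReal (measure_ne_top P _)]
  exact ENNReal.ofReal_le_ofReal (hcher.trans_eq hkey)
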